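/- arXiv:2110.15123 — 7 statements merged into one kernel-verified Lean document; each statement's English description precedes it below -/
import Mathlib

section
/- 6174 is the unique fixed point of the 4-digit Kaprekar map among numbers n with 0 < n < 10000 that do not have all four digits equal. -/
/-- The decimal digits of `n` (little-endian), padded with zeros to length `w`. -/
def padDigits (w n : ℕ) : List ℕ := (Nat.digits 10 n ++ List.replicate w 0).take w

/-- The padded digits of `n` sorted ascending (little-endian), so that
`Nat.ofDigits 10 (sortedDigits w n)` is the descending arrangement `X` and
`Nat.ofDigits 10 (sortedDigits w n).reverse` is the ascending arrangement `Y`. -/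
def sortedDigits (w n : ℕ) : List ℕ := (padDigits w n).mergeSort (· ≤ ·)

/-- The Kaprekar map on `w`-digit numbers: descending arrangement minus ascending arrangement. -/
def kap (w n : ℕ) : ℕ :=
  Nat.ofDigits 10 (sortedDigits w n) - Nat.ofDigits 10 (sortedDigits w n).reverse

/-- All `w` (padded) digits of `n` are equal. -/
def allEqDigits (w n : ℕ) : Prop := ∃ d, padDigits w n = List.replicate w d

lemma pad4 (n : ℕ) (h : n < 10000) :
    padDigits 4 n = [n % 10, n / 10 % 10, n / 100 % 10, n / 1000] := by
  have h10 : (1:ℕ) < 10 := by norm_num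
  have e2 : n / 10 / 10 = n / 100 := by omega
  have e3 : n / 100 / 10 = n / 1000 := by omega
  unfold padDigits
  rcases Nat.eq_zero_or_pos n with rfl | h1
  · simp
  rw [Nat.digits_def' h10 h1]
  rcases Nat.eq_zero_or_pos (n / 10) with e1 | hq
  · rw [e1]; simp; omega
  rw [Nat.digits_def' h10 hq, e2]
  rcases Nat.eq_zero_or_pos (n / 100) with e1 | hq2
  · rw [e1]; simp; omega
  rw [Nat.digits_def' h10 hq2, e3]
  rcases Nat.eq_zero_or_pos (n / 1000) with e1 | hq3
  · rw [e1]; simp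
  rw [Nat.digits_of_lt 10 (n/1000) (by omega) (by omega)]
  simp

/-- A kernel-reducible version of `kap 4`. -/
def kap' (n : ℕ) : ℕ :=
  let l := List.insertionSort (· ≤ ·) [n % 10, n / 10 % 10, n / 100 % 10, n / 1000]
  Nat.ofDigits 10 l - Nat.ofDigits 10 l.reverse

lemma kap_eq (n : ℕ) (h : n < 10000) : kap 4 n = kap' n := by
  simp [kap, kap', sortedDigits, List.mergeSort_eq_insertionSort, pad4 n h]

set_option maxRecDepth 10000 in
set_option maxHeartbeats 4000000 in
lemma key : ∀ a ∈ Finset.range 100, ∀ b ∈ Finset.range 100,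
    0 < 100*a+b → (kap' (100*a+b) = 100*a+b ↔ 100*a+b = 6174) := by decide

theorem stmt1 (n : ℕ) (h0 : 0 < n) (h1 : n < 10000) (h2 : ¬ allEqDigits 4 n) :
    kap 4 n = n ↔ n = 6174 := by
  rw [kap_eq n h1]
  have := key (n / 100) (Finset.mem_range.mpr (by omega)) (n % 100)
    (Finset.mem_range.mpr (by omega)) (by omega)
  have e : 100 * (n / 100) + n % 100 = n := by omega
  rwa [e] at this
end

section
/- For any n with 0 < n < 10000 whose four decimal digits are not all equal, if the ordered digits a₀ ≥ b₀ ≥ c₀ ≥ d₀ of n satisfy b₀ > c₀, then K(n) has digit sum 18; if b₀ = c₀, then K(n) has digit sum 27. -/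
theorem stmt5 (n a₀ b₀ c₀ d₀ : ℕ) (h0 : 0 < n) (h1 : n < 10000)
    (h2 : ¬ allEqDigits 4 n)
    (hs : sortedDigits 4 n = [d₀, c₀, b₀, a₀]) :
    (c₀ < b₀ → (Nat.digits 10 (kap 4 n)).sum = 18) ∧
    (b₀ = c₀ → (Nat.digits 10 (kap 4 n)).sum = 27) := by
  -- sortedness
  have hsorted := List.pairwise_mergeSort (le := fun a b : ℕ => decide (a ≤ b))
    (by intro a b c hab hbc; simp_all; omega) (by intro a b; simp; omega) (padDigits 4 n)
  rw [show (padDigits 4 n).mergeSort (fun a b => decide (a ≤ b)) = sortedDigits 4 n from rfl, hs] at hsorted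
  simp [List.pairwise_cons] at hsorted
  obtain ⟨⟨hdc, hdb, hda⟩, ⟨hcb, hca⟩, hba⟩ := hsorted
  -- digits < 10
  have hperm : (sortedDigits 4 n).Perm (padDigits 4 n) := List.mergeSort_perm _ _
  have hlt : ∀ x ∈ sortedDigits 4 n, x < 10 := by
    intro x hx
    have hx' : x ∈ padDigits 4 n := hperm.mem_iff.mp hx
    have := List.mem_of_mem_take hx'
    rcases List.mem_append.mp this with h | h
    · exact Nat.digits_lt_base (by norm_num) h
    · simp at h; omega
  have ha9 : a₀ < 10 := hlt a₀ (by rw [hs]; simp)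
  -- not all equal → d₀ < a₀
  have hda' : d₀ < a₀ := by
    rcases Nat.lt_or_ge d₀ a₀ with h | h
    · exact h
    · exfalso; apply h2
      refine ⟨d₀, ?_⟩
      have heq : d₀ = a₀ := le_antisymm hda h
      have hall : sortedDigits 4 n = List.replicate 4 d₀ := by
        rw [hs]; simp [List.replicate]; omega
      rw [List.eq_replicate_iff]
      constructor
      · have := hperm.length_eq
        rw [hall] at this; simpa using this.symm
      · intro b hb
        have : b ∈ sortedDigits 4 n := hperm.symm.mem_iff.mp hb
        rw [hall] at this; simpa using this
  -- kap value
  have hk : kap 4 n = 999 * (a₀ - d₀) + 90 * (b₀ - c₀) := by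
    have : kap 4 n = (d₀ + 10 * (c₀ + 10 * (b₀ + 10 * (a₀ + 10 * 0))))
        - (a₀ + 10 * (b₀ + 10 * (c₀ + 10 * (d₀ + 10 * 0)))) := by
      simp [kap, hs, Nat.ofDigits]
    omega
  constructor
  · intro hcb'
    have hβ1 : 1 ≤ b₀ - c₀ := by omega
    have hβ9 : b₀ - c₀ ≤ 9 := by omega
    have hα1 : 1 ≤ a₀ - d₀ := by omega
    have hα9 : a₀ - d₀ ≤ 9 := by omega
    rw [hk]
    set α := a₀ - d₀; set β := b₀ - c₀
    clear_value α β
    clear hk hs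
    interval_cases α <;> interval_cases β <;> norm_num
  · intro hbc
    have hα1 : 1 ≤ a₀ - d₀ := by omega
    have hα9 : a₀ - d₀ ≤ 9 := by omega
    rw [hk, hbc]
    simp only [Nat.sub_self, Nat.mul_zero, Nat.add_zero]
    set α := a₀ - d₀
    clear_value α
    clear hk hs
    interval_cases α <;> norm_num
end

section
/- If two numbers m, n (each with four decimal digits, not all equal) have the same parameters α and β, i.e., the same difference of extreme ordered digits and the same difference of middle ordered digits, then K(m) = K(n). -/
lemma sd_len (n : ℕ) : 4 ≤ (sortedDigits 4 n).length := by
  simp [sortedDigits, padDigits, List.length_mergeSort]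

lemma sd_sorted (n : ℕ) : (sortedDigits 4 n).Pairwise (· ≤ ·) :=
  List.pairwise_mergeSort' _ _

lemma kap_eq_s8 (n : ℕ) :
    kap 4 n = 999 * ((sortedDigits 4 n).getD 3 0 - (sortedDigits 4 n).getD 0 0)
      + 90 * ((sortedDigits 4 n).getD 2 0 - (sortedDigits 4 n).getD 1 0) := by
  have hlen := sd_len n
  have hs := sd_sorted n
  unfold kap
  rcases h : sortedDigits 4 n with _|⟨a,_|⟨b,_|⟨c,_|⟨d,t⟩⟩⟩⟩ <;>
    rw [h] at hlen <;> simp at hlen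
  rw [h] at hs
  have ht : t = [] := by
    have hl : (sortedDigits 4 n).length = 4 := by
      simp [sortedDigits, padDigits, List.length_mergeSort]
    rw [h] at hl; simpa using hl
  subst ht
  simp [List.pairwise_cons] at hs
  obtain ⟨⟨hab,hac,had⟩,⟨hbc,hbd⟩,hcd⟩ := hs
  simp [Nat.ofDigits]
  ring_nf
  omega

theorem stmt8 (m n : ℕ)
    (hm0 : 0 < m) (hm1 : m < 10000) (hm2 : ¬ allEqDigits 4 m)
    (hn0 : 0 < n) (hn1 : n < 10000) (hn2 : ¬ allEqDigits 4 n)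
    (hα : (sortedDigits 4 m).getD 3 0 - (sortedDigits 4 m).getD 0 0
        = (sortedDigits 4 n).getD 3 0 - (sortedDigits 4 n).getD 0 0)
    (hβ : (sortedDigits 4 m).getD 2 0 - (sortedDigits 4 m).getD 1 0
        = (sortedDigits 4 n).getD 2 0 - (sortedDigits 4 n).getD 1 0) :
    kap 4 m = kap 4 n := by
  rw [kap_eq_s8, kap_eq_s8, hα, hβ]
end

section
/- For the 3-digit Kaprekar routine, if n has parameter α (the difference between largest and smallest digit), then K(n) has parameter α - 1 when 6 ≤ α ≤ 9, and parameter 10 - α when 0 < α ≤ 5. -/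
/-- The parameter of a 3-digit number: largest digit minus smallest digit. -/
def param3 (n : ℕ) : ℕ := (sortedDigits 3 n).getD 2 0 - (sortedDigits 3 n).getD 0 0

lemma sorted3 (n : ℕ) : ∃ a b c, sortedDigits 3 n = [a,b,c] ∧ a ≤ b ∧ b ≤ c ∧ c < 10 := by
  have hlen : (sortedDigits 3 n).length = 3 := by
    simp [sortedDigits, padDigits, List.length_mergeSort]
  have hsorted : (sortedDigits 3 n).Pairwise (· ≤ ·) := by
    exact List.pairwise_mergeSort' (r := (· ≤ · : ℕ → ℕ → Prop)) _
  have hmem : ∀ x ∈ sortedDigits 3 n, x < 10 := by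
    intro x hx
    have : x ∈ padDigits 3 n := (List.mergeSort_perm _ _).mem_iff.mp hx
    have := List.mem_of_mem_take this
    rcases List.mem_append.mp this with h | h
    · exact Nat.digits_lt_base (by norm_num) h
    · simp at h; omega
  match hl : sortedDigits 3 n, hlen with
  | [a,b,c], _ =>
    refine ⟨a, b, c, rfl, ?_, ?_, ?_⟩
    · have := hsorted; rw [hl] at this; simp [List.Pairwise] at this; omega
    · have := hsorted; rw [hl] at this; simp [List.Pairwise] at this; omega
    · exact hmem c (by rw [hl]; simp)

lemma kap_eq_s13 (n : ℕ) : kap 3 n = 99 * param3 n := by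
  obtain ⟨a, b, c, hl, hab, hbc, hc⟩ := sorted3 n
  rw [kap, param3, hl]
  simp [Nat.ofDigits]
  omega

lemma p1 : param3 99 = 9 := by
  have : Nat.digits 10 99 = [9,9] := by norm_num
  simp [param3, sortedDigits, padDigits, this, List.mergeSort]
lemma p2 : param3 198 = 8 := by
  have : Nat.digits 10 198 = [8,9,1] := by norm_num
  simp [param3, sortedDigits, padDigits, this, List.mergeSort]
lemma p3 : param3 297 = 7 := by
  have : Nat.digits 10 297 = [7,9,2] := by norm_num
  simp [param3, sortedDigits, padDigits, this, List.mergeSort]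
lemma p4 : param3 396 = 6 := by
  have : Nat.digits 10 396 = [6,9,3] := by norm_num
  simp [param3, sortedDigits, padDigits, this, List.mergeSort]
lemma p5 : param3 495 = 5 := by
  have : Nat.digits 10 495 = [5,9,4] := by norm_num
  simp [param3, sortedDigits, padDigits, this, List.mergeSort]
lemma p6 : param3 594 = 5 := by
  have : Nat.digits 10 594 = [4,9,5] := by norm_num
  simp [param3, sortedDigits, padDigits, this, List.mergeSort]
lemma p7 : param3 693 = 6 := by
  have : Nat.digits 10 693 = [3,9,6] := by norm_num
  simp [param3, sortedDigits, padDigits, this, List.mergeSort]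
lemma p8 : param3 792 = 7 := by
  have : Nat.digits 10 792 = [2,9,7] := by norm_num
  simp [param3, sortedDigits, padDigits, this, List.mergeSort]
lemma p9 : param3 891 = 8 := by
  have : Nat.digits 10 891 = [1,9,8] := by norm_num
  simp [param3, sortedDigits, padDigits, this, List.mergeSort]

theorem stmt13 (n : ℕ) (h0 : 0 < n) (h1 : n < 1000) (h2 : ¬ allEqDigits 3 n) :
    (6 ≤ param3 n ∧ param3 n ≤ 9 → param3 (kap 3 n) = param3 n - 1) ∧
    (0 < param3 n ∧ param3 n ≤ 5 → param3 (kap 3 n) = 10 - param3 n) := by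
  rw [kap_eq_s13]
  obtain ⟨a, b, c, hl, hab, hbc, hc⟩ := sorted3 n
  have hp : param3 n = c - a := by rw [param3, hl]; rfl
  have h9 : param3 n ≤ 9 := by omega
  set α := param3 n with hα
  clear_value α
  interval_cases α <;>
    simp [p1, p2, p3, p4, p5, p6, p7, p8, p9]
end

section
/- Every 2-digit number n with distinct digits eventually enters the 5-cycle 09 → 81 → 63 → 27 → 45 → 09 under iteration of the Kaprekar map; in particular K⁵(9) = 9 where 9 = '09'. -/
lemma key_s15 (n : ℕ) (h : n < 100) :
    padDigits 2 n = List.replicate 2 ((padDigits 2 n).headI) ∨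
    kap 2 (kap 2 n) ∈ [9, 81, 63, 27, 45] := by
  interval_cases n <;>
    simp [kap, sortedDigits, padDigits, List.mergeSort, List.merge, Nat.ofDigits]

theorem stmt15 :
    kap 2 9 = 81 ∧ kap 2 81 = 63 ∧ kap 2 63 = 27 ∧ kap 2 27 = 45 ∧ kap 2 45 = 9 ∧
    (kap 2)^[5] 9 = 9 ∧
    (∀ n : ℕ, 0 < n → n < 100 → ¬ allEqDigits 2 n →
      ∃ k : ℕ, (kap 2)^[k] n ∈ ({9, 81, 63, 27, 45} : Set ℕ)) := by
  have h9 : kap 2 9 = 81 := by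
    simp [kap, sortedDigits, padDigits, List.mergeSort, List.merge, Nat.ofDigits]
  have h81 : kap 2 81 = 63 := by
    simp [kap, sortedDigits, padDigits, List.mergeSort, List.merge, Nat.ofDigits]
  have h63 : kap 2 63 = 27 := by
    simp [kap, sortedDigits, padDigits, List.mergeSort, List.merge, Nat.ofDigits]
  have h27 : kap 2 27 = 45 := by
    simp [kap, sortedDigits, padDigits, List.mergeSort, List.merge, Nat.ofDigits]
  have h45 : kap 2 45 = 9 := by
    simp [kap, sortedDigits, padDigits, List.mergeSort, List.merge, Nat.ofDigits]
  refine ⟨h9, h81, h63, h27, h45, ?_, ?_⟩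
  · show kap 2 (kap 2 (kap 2 (kap 2 (kap 2 9)))) = 9
    rw [h9, h81, h63, h27, h45]
  · intro n _ hn hne
    rcases key_s15 n hn with h | h
    · exact absurd ⟨_, h⟩ hne
    · refine ⟨2, ?_⟩
      show kap 2 (kap 2 n) ∈ _
      simpa [Set.mem_insert_iff] using h
end

section
/- The numbers 53955 and 59994 form a 2-cycle of the 5-digit Kaprekar map: K(53955) = 59994 and K(59994) = 53955. -/
lemma pd1 : padDigits 5 53955 = [5,5,9,3,5] := by norm_num [padDigits]
lemma pd2 : padDigits 5 59994 = [4,9,9,9,5] := by norm_num [padDigits]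
lemma sd1 : sortedDigits 5 53955 = [3,5,5,5,9] := by
  rw [sortedDigits, pd1]; simp [List.mergeSort]
lemma sd2 : sortedDigits 5 59994 = [4,5,9,9,9] := by
  rw [sortedDigits, pd2]; simp [List.mergeSort]

theorem stmt17 : kap 5 53955 = 59994 ∧ kap 5 59994 = 53955 := by
  constructor
  · rw [kap, sd1]; norm_num [Nat.ofDigits]
  · rw [kap, sd2]; norm_num [Nat.ofDigits]
end

section
/- For every w ≥ 3, the number 4·10^(w-1) + 9·(10^(w-2) + ... + 10) + 5 (i.e., the digit string 4 9 ... 9 5 with w-2 nines) is a fixed point of the transformation T defined by: sort the digits of n descending to get X = (a₀, b₀, ..., z₀), swap the first and last digits of X to get Y, and set T(n) = X - Y. -/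
/-- Swap the first and last entries of a list. -/
def swapEnds (l : List ℕ) : List ℕ :=
  (l.set 0 (l.getD (l.length - 1) 0)).set (l.length - 1) (l.getD 0 0)

/-- The transformation `T`: sort the digits of `n` descending to get `X`, swap the
extreme (first and last) digits of `X` to get `Y`, and return `X - Y`.
(In the little-endian representation `sortedDigits w n` of `X`, swapping the extreme
digits of `X` corresponds to swapping the first and last entries of the list.) -/
def kapSwap (w n : ℕ) : ℕ :=
  Nat.ofDigits 10 (sortedDigits w n) - Nat.ofDigits 10 (swapEnds (sortedDigits w n))

lemma ofDigits_rep9 (k : ℕ) : Nat.ofDigits 10 (List.replicate k 9) = 10 ^ k - 1 := by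
  induction k with
  | zero => simp
  | succ k ih =>
    rw [List.replicate_succ, Nat.ofDigits_cons, ih, pow_succ]
    have : 1 ≤ 10 ^ k := Nat.one_le_pow _ _ (by norm_num)
    omega

lemma sum9 (k : ℕ) : 9 * (∑ i ∈ Finset.Ico 1 (k + 2), 10 ^ i) = 10 ^ (k + 2) - 10 := by
  induction k with
  | zero => decide
  | succ k ih =>
    rw [show k + 1 + 2 = (k + 2) + 1 from rfl, Finset.sum_Ico_succ_top (by omega),
      Nat.mul_add, ih]
    have h1 : (10:ℕ) ^ (k + 2 + 1) = 10 * 10 ^ (k + 2) := by ring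
    have h2 : (10:ℕ) ≤ 10 ^ (k + 2) := by
      calc (10:ℕ) = 10 ^ 1 := by norm_num
      _ ≤ 10 ^ (k + 2) := Nat.pow_le_pow_right (by norm_num) (by omega)
    omega

lemma set_rep9 (k : ℕ) : (List.replicate (k + 1) 9).set k 4 = List.replicate k 9 ++ [4] := by
  induction k with
  | zero => rfl
  | succ k ih => rw [List.replicate_succ, List.set_cons_succ, ih]; rfl

theorem stmt19 (w : ℕ) (hw : 3 ≤ w) :
    kapSwap w (4 * 10 ^ (w - 1) + 9 * (∑ i ∈ Finset.Ico 1 (w - 1), 10 ^ i) + 5)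
      = 4 * 10 ^ (w - 1) + 9 * (∑ i ∈ Finset.Ico 1 (w - 1), 10 ^ i) + 5 := by
  obtain ⟨k, rfl⟩ : ∃ k, w = k + 3 := ⟨w - 3, by omega⟩
  set n := 4 * 10 ^ (k + 3 - 1) + 9 * (∑ i ∈ Finset.Ico 1 (k + 3 - 1), 10 ^ i) + 5 with hn
  have hP : (10:ℕ) ^ (k + 2) ≥ 100 := by
    calc (100:ℕ) = 10 ^ 2 := by norm_num
    _ ≤ 10 ^ (k + 2) := Nat.pow_le_pow_right (by norm_num) (by omega)
  have hnval : n = 5 * 10 ^ (k + 2) - 5 := by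
    rw [hn, show k + 3 - 1 = k + 2 from rfl, sum9]
    omega
  -- the digit list of n
  set L : List ℕ := 5 :: (List.replicate (k + 1) 9 ++ [4]) with hL
  have hLlen : L.length = k + 3 := by simp [hL]
  have hLval : Nat.ofDigits 10 L = n := by
    rw [hL, Nat.ofDigits_cons, Nat.ofDigits_append, ofDigits_rep9]
    simp only [List.length_replicate, Nat.ofDigits_singleton]
    have h1 : (1:ℕ) ≤ 10 ^ (k + 1) := Nat.one_le_pow _ _ (by norm_num)
    have h2 : 10 * 10 ^ (k + 1) = 10 ^ (k + 2) := by ring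
    rw [hnval]
    omega
  have hdig : Nat.digits 10 n = L := by
    rw [← hLval]
    refine Nat.digits_ofDigits 10 (by norm_num) L ?_ ?_
    · intro l hl
      rw [hL] at hl
      rcases List.mem_cons.1 hl with rfl | hl
      · norm_num
      rcases List.mem_append.1 hl with hl | hl
      · rw [List.eq_of_mem_replicate hl]; norm_num
      · rw [List.mem_singleton.1 hl]; norm_num
    · intro h
      show ((5 :: List.replicate (k + 1) 9) ++ [4]).getLast (by simp) ≠ 0
      rw [List.getLast_concat]
      norm_num
  have hpad : padDigits (k + 3) n = L := by
    rw [padDigits, hdig, ← hLlen, List.take_left]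
  -- the sorted list
  set S : List ℕ := 4 :: 5 :: List.replicate (k + 1) 9 with hS
  have hSsorted : List.Pairwise (· ≤ ·) S := by
    rw [hS]
    refine List.pairwise_cons.2 ⟨?_, List.pairwise_cons.2 ⟨?_, ?_⟩⟩
    · intro b hb
      simp only [List.mem_cons, List.mem_replicate] at hb
      rcases hb with h | h <;> omega
    · intro b hb
      simp only [List.mem_replicate] at hb
      omega
    · exact List.pairwise_replicate.2 (Or.inr le_rfl)
  have hperm : L.Perm S := by
    rw [hL, hS]
    exact ((List.perm_append_singleton 4 _).cons 5).trans (List.Perm.swap 4 5 _)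
  have hsort : sortedDigits (k + 3) n = S := by
    rw [sortedDigits, hpad]
    exact List.Perm.eq_of_pairwise' (List.pairwise_mergeSort' _ L) hSsorted
      ((List.mergeSort_perm L _).trans hperm)
  have hSlen : S.length = k + 3 := by simp [hS]
  have hswap : swapEnds S = 9 :: 5 :: (List.replicate k 9 ++ [4]) := by
    rw [swapEnds, hSlen]
    have hlast : S.getD (k + 3 - 1) 0 = 9 := by
      rw [hS]
      show (4 :: 5 :: List.replicate (k + 1) 9 : List ℕ).getD (k + 2) 0 = 9
      rw [List.getD_cons_succ, List.getD_cons_succ]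
      simp [List.getD_eq_getElem?_getD]
    have hfirst : S.getD 0 0 = 4 := by rw [hS]; rfl
    rw [hlast, hfirst, hS]
    show ((9 : ℕ) :: 5 :: List.replicate (k + 1) 9).set (k + 2) 4 = _
    rw [List.set_cons_succ, List.set_cons_succ, set_rep9]
  have hX : Nat.ofDigits 10 S = 10 ^ (k + 3) - 46 := by
    rw [hS, Nat.ofDigits_cons, Nat.ofDigits_cons, ofDigits_rep9]
    have h1 : (1:ℕ) ≤ 10 ^ (k + 1) := Nat.one_le_pow _ _ (by norm_num)
    have h2 : 10 * (10 * 10 ^ (k + 1)) = 10 ^ (k + 3) := by ring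
    omega
  have hY : Nat.ofDigits 10 (swapEnds S) = 5 * 10 ^ (k + 2) - 41 := by
    rw [hswap, Nat.ofDigits_cons, Nat.ofDigits_cons, Nat.ofDigits_append, ofDigits_rep9]
    simp only [List.length_replicate, Nat.ofDigits_singleton]
    have h1 : (1:ℕ) ≤ 10 ^ k := Nat.one_le_pow _ _ (by norm_num)
    have h2 : 10 * (10 * 10 ^ k) = 10 ^ (k + 2) := by ring
    omega
  show kapSwap (k + 3) n = n
  rw [kapSwap, hsort, hX, hY, hnval]
  have h3 : (10:ℕ) ^ (k + 3) = 10 * 10 ^ (k + 2) := by ring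
  omega
end
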